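/- Let K ⊂ ℝⁿ be a closed cone containing x, and let h_x : ℝⁿ → ℝⁿ, η > 0, μ₁ ∈ [0, 1/2), μ₂ ≥ 0 be such that for all u ∈ U, sup_{v ∈ (K−K) ∩ B₂ⁿ} ⟨u − x − η·h_x(u), v⟩ ≤ μ₁‖u − x‖₂ + μ₂, where U ⊃ K ∩ B₂ⁿ(x; d) for some d with 2μ₂/(1 − 2μ₁) < d ≤ ∞. Assume the projection P_K onto K is well-defined on all iterates. Then the sequence defined by x₀ ∈ K ∩ B₂ⁿ(x; d) and x_{t+1} = P_K(x_t − η·h_x(x_t)) satisfies ‖x_t − x‖₂ ≤ (2μ₁)^t ‖x₀ − x‖₂ + 2μ₂/(1 − 2μ₁) for all t ≥ 0. -/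
import Mathlib


open RealInnerProductSpace Pointwise

/-- Convergence of projected gradient descent under the RAIC for a closed cone `K`
(Theorem `coneK`). Here `K₁ = (K − K) ∩ B₂ⁿ` and the RAIC bounds the `K₁°` dual norm of
the deviation of the actual step from the ideal step. -/
theorem stmt6 {n : ℕ}
    (K U : Set (EuclideanSpace ℝ (Fin n))) (hKclosed : IsClosed K)
    (hKcone : ∀ c : ℝ, 0 ≤ c → ∀ v ∈ K, c • v ∈ K)
    (xs : EuclideanSpace ℝ (Fin n)) (hxs : xs ∈ K)
    (η μ₁ μ₂ d : ℝ) (hη : 0 < η)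
    (hμ₁0 : 0 ≤ μ₁) (hμ₁ : μ₁ < 1/2) (hμ₂ : 0 ≤ μ₂)
    (hd : 2 * μ₂ / (1 - 2 * μ₁) < d)
    (h : EuclideanSpace ℝ (Fin n) → EuclideanSpace ℝ (Fin n))
    (hU : K ∩ Metric.closedBall xs d ⊆ U)
    (hRAIC : ∀ u ∈ U,
      sSup ((fun v => (⟪u - xs - η • h u, v⟫ : ℝ)) ''
          ((K - K) ∩ Metric.closedBall 0 1)) ≤ μ₁ * ‖u - xs‖ + μ₂)
    (x : ℕ → EuclideanSpace ℝ (Fin n))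
    (hx0 : x 0 ∈ K ∩ Metric.closedBall xs d)
    (hstep : ∀ t : ℕ, x (t + 1) ∈ K ∧
      ∀ y ∈ K, ‖x (t + 1) - (x t - η • h (x t))‖ ≤ ‖y - (x t - η • h (x t))‖) :
    ∀ t : ℕ, ‖x t - xs‖ ≤ (2 * μ₁) ^ t * ‖x 0 - xs‖ + 2 * μ₂ / (1 - 2 * μ₁) := by
  have hs : (0:ℝ) < 1 - 2 * μ₁ := by linarith
  have hB0 : 0 ≤ 2 * μ₂ / (1 - 2 * μ₁) := by positivity
  -- one-step contraction
  have key : ∀ t, x t ∈ K → ‖x t - xs‖ ≤ d →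
      ‖x (t+1) - xs‖ ≤ 2 * μ₁ * ‖x t - xs‖ + 2 * μ₂ := by
    intro t hKt hdt
    set u := x t with hu
    set w := u - η • h u with hw
    set p := x (t+1) with hp
    have hpK : p ∈ K := (hstep t).1
    have hUx : u ∈ U := hU ⟨hKt, by simpa [Metric.mem_closedBall, dist_eq_norm] using hdt⟩
    have hproj : ‖p - w‖ ≤ ‖xs - w‖ := (hstep t).2 xs hxs
    have hsq : ‖p - xs‖ ^ 2 ≤ 2 * ⟪p - xs, w - xs⟫ := by
      have h1 : ‖p - xs‖ ^ 2 = ‖p - w‖ ^ 2 + 2 * ⟪p - w, w - xs⟫ + ‖w - xs‖ ^ 2 := by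
        have := norm_add_sq_real (p - w) (w - xs)
        simpa [sub_add_sub_cancel] using this
      have h2 : ‖p - w‖ ^ 2 ≤ ‖w - xs‖ ^ 2 := by
        rw [norm_sub_rev w xs]
        exact pow_le_pow_left₀ (norm_nonneg _) hproj 2
      have h3 : ⟪p - xs, w - xs⟫ = ⟪p - w, w - xs⟫ + ‖w - xs‖ ^ 2 := by
        rw [← real_inner_self_eq_norm_sq, ← inner_add_left, sub_add_sub_cancel]
      linarith
    have hinner : ⟪p - xs, w - xs⟫ ≤ ‖p - xs‖ * (μ₁ * ‖u - xs‖ + μ₂) := by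
      rcases eq_or_lt_of_le (norm_nonneg (p - xs)) with h0 | hr
      · have : p - xs = 0 := norm_eq_zero.mp h0.symm
        rw [this, inner_zero_left]
        positivity
      · set v := ‖p - xs‖⁻¹ • (p - xs) with hv
        have hvmem : v ∈ (K - K) ∩ Metric.closedBall 0 1 := by
          constructor
          · refine ⟨‖p - xs‖⁻¹ • p, hKcone _ (by positivity) _ hpK,
              ‖p - xs‖⁻¹ • xs, hKcone _ (by positivity) _ hxs, ?_⟩
            rw [hv, smul_sub]
          · rw [Metric.mem_closedBall, dist_zero_right, hv, norm_smul,
              Real.norm_eq_abs, abs_of_nonneg (by positivity)]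
            rw [inv_mul_cancel₀ (ne_of_gt hr)]
        have hbdd : BddAbove ((fun v => (⟪u - xs - η • h u, v⟫ : ℝ)) ''
            ((K - K) ∩ Metric.closedBall 0 1)) := by
          refine ⟨‖u - xs - η • h u‖, ?_⟩
          rintro _ ⟨v', hv', rfl⟩
          calc (⟪u - xs - η • h u, v'⟫ : ℝ) ≤ ‖u - xs - η • h u‖ * ‖v'‖ :=
                real_inner_le_norm _ _
            _ ≤ ‖u - xs - η • h u‖ * 1 := by
                have : ‖v'‖ ≤ 1 := by
                  have := hv'.2
                  rwa [Metric.mem_closedBall, dist_zero_right] at this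
                exact mul_le_mul_of_nonneg_left this (norm_nonneg _)
            _ = ‖u - xs - η • h u‖ := mul_one _
        have hle : (⟪u - xs - η • h u, v⟫ : ℝ) ≤ μ₁ * ‖u - xs‖ + μ₂ :=
          le_trans (le_csSup hbdd ⟨v, hvmem, rfl⟩) (hRAIC u hUx)
        have hweq : w - xs = u - xs - η • h u := by rw [hw]; abel
        have hiv : (⟪u - xs - η • h u, v⟫ : ℝ) = ‖p - xs‖⁻¹ * ⟪p - xs, w - xs⟫ := by
          rw [hv, real_inner_smul_right, hweq, real_inner_comm]
        have := mul_le_mul_of_nonneg_left hle (le_of_lt hr)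
        rw [hiv, ← mul_assoc, mul_inv_cancel₀ (ne_of_gt hr), one_mul] at this
        exact this
    rcases eq_or_lt_of_le (norm_nonneg (p - xs)) with h0 | hr
    · rw [← h0]; positivity
    · nlinarith [hsq, hinner]
  have hx0d : ‖x 0 - xs‖ ≤ d := by
    have := hx0.2
    rwa [Metric.mem_closedBall, dist_eq_norm] at this
  have hdd : 2 * μ₂ < d * (1 - 2 * μ₁) := (div_lt_iff₀ hs).mp hd
  have hBeq : 2 * μ₁ * (2 * μ₂ / (1 - 2 * μ₁)) + 2 * μ₂ = 2 * μ₂ / (1 - 2 * μ₁) := by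
    field_simp
    ring
  have inv : ∀ t, x t ∈ K ∧ ‖x t - xs‖ ≤ d ∧
      ‖x t - xs‖ ≤ (2 * μ₁) ^ t * ‖x 0 - xs‖ + 2 * μ₂ / (1 - 2 * μ₁) := by
    intro t
    induction t with
    | zero =>
      refine ⟨hx0.1, hx0d, ?_⟩
      simp only [pow_zero, one_mul]
      linarith
    | succ t ih =>
      obtain ⟨h1, h2, h3⟩ := ih
      have hk := key t h1 h2
      refine ⟨(hstep t).1, by nlinarith, ?_⟩
      have hpow : (2 * μ₁) ^ (t + 1) = 2 * μ₁ * (2 * μ₁) ^ t := pow_succ' _ _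
      have hmul := mul_le_mul_of_nonneg_left h3 (by positivity : (0:ℝ) ≤ 2 * μ₁)
      rw [hpow]
      nlinarith [hmul, hk]
  intro t
  exact (inv t).2.2
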